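/- Let m, n ∈ ℤ and let f : [0,∞) → ℝ be integrable, equal to 0 outside [0, 2^m], and constant on every dyadic interval [k·2^{−n}, (k+1)·2^{−n}), k ∈ ℕ. Then the Walsh–Fourier transform 𝔉f is equal to 0 outside [0, 2^n] and is constant on every dyadic interval [j·2^{−m}, (j+1)·2^{−m}), j ∈ ℕ. -/

import Mathlib

open MeasureTheory Finset

/-- The `j`-th binary digit of `x` after the binary point. -/
noncomputable def binDigit (j : ℕ) (x : ℝ) : ℕ := (⌊(2:ℝ)^j * x⌋).toNat % 2

/-- The Walsh function `w_k(x) = (-1)^{∑ k_i d_{i+1}(x)}`. -/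
noncomputable def walsh (k : ℕ) (x : ℝ) : ℝ :=
  (-1 : ℝ) ^ (∑ i ∈ Finset.range (k+1), (k / 2^i % 2) * binDigit (i+1) x)

/-- The generalized Walsh kernel `ψ(x,y) = w_{⌊y⌋}(x) · w_{⌊x⌋}(y)`. -/
noncomputable def walshKernel (x y : ℝ) : ℝ := walsh (⌊y⌋).toNat x * walsh (⌊x⌋).toNat y

/-- The Walsh–Fourier transform `(𝔉f)(y) = ∫_{[0,∞)} ψ(x,y) f(x) dx`. -/
noncomputable def walshFourier (f : ℝ → ℝ) (y : ℝ) : ℝ :=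
  ∫ x in Set.Ici (0:ℝ), walshKernel x y * f x

/-- The dyadic translate `x ⊕ j = (⌊x⌋ XOR j) + (x - ⌊x⌋)`. -/
noncomputable def dyadicAdd (x : ℝ) (j : ℕ) : ℝ := ((⌊x⌋.toNat ^^^ j : ℕ) : ℝ) + (x - ⌊x⌋)


/-- floor of division by a positive integer. -/
lemma floor_div_int' (t : ℝ) (d : ℤ) (hd : 0 < d) : ⌊t / (d:ℝ)⌋ = ⌊t⌋ / d := by
  have hd' : (0:ℝ) < (d:ℝ) := by exact_mod_cast hd
  have hmod := Int.emod_lt_of_pos ⌊t⌋ hd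
  have hmod0 := Int.emod_nonneg ⌊t⌋ (by omega : d ≠ 0)
  have heq := Int.emod_add_mul_ediv ⌊t⌋ d
  rw [Int.floor_eq_iff]
  constructor
  · rw [le_div_iff₀ hd']
    calc ((⌊t⌋ / d : ℤ) : ℝ) * d = ((d * (⌊t⌋/d) : ℤ) : ℝ) := by push_cast; ring
    _ ≤ (⌊t⌋ : ℝ) := by exact_mod_cast (by omega : d * (⌊t⌋/d) ≤ ⌊t⌋)
    _ ≤ t := Int.floor_le t
  · rw [div_lt_iff₀ hd']
    calc t < (⌊t⌋ : ℝ) + 1 := Int.lt_floor_add_one t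
    _ ≤ ((d * (⌊t⌋/d) + d : ℤ) : ℝ) := by exact_mod_cast (by omega : (⌊t⌋:ℤ) + 1 ≤ d * (⌊t⌋/d) + d)
    _ = ((⌊t⌋ / d : ℤ) + 1) * d := by push_cast; ring

lemma ediv_add_one_eq {q D : ℤ} (hq : q % 2 = 0) (hD : 2 ∣ D) (hD0 : 0 < D) :
    (q + 1) / D = q / D := by
  have hs0 := Int.emod_nonneg q (by omega : D ≠ 0)
  have hs1 := Int.emod_lt_of_pos q hD0
  have hs2 : q % D % 2 = 0 := by rw [Int.emod_emod_of_dvd q hD]; exact hq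
  have hlt : q % D + 1 < D := by omega
  have heq := Int.emod_add_mul_ediv q D
  have h2 : q + 1 = (q % D + 1) + D * (q / D) := by omega
  rw [h2, Int.add_mul_ediv_left _ _ (by omega : D ≠ 0),
    Int.ediv_eq_zero_of_lt (by omega) hlt, zero_add]

lemma two_zpow_int_cast (c : ℕ) : (((2:ℤ)^c : ℤ) : ℝ) = (2:ℝ)^(c:ℤ) := by
  push_cast
  rw [zpow_natCast]

/-- floor at a coarse scale as integer division of the floor at a fine scale. -/
lemma floor_scale {b B : ℤ} (h : b ≤ B) (t : ℝ) :
    ⌊(2:ℝ)^b * t⌋ = ⌊(2:ℝ)^B * t⌋ / (2:ℤ)^((B-b).toNat) := by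
  have key : (2:ℝ)^b * t = ((2:ℝ)^B * t) / (((2:ℤ)^((B-b).toNat) : ℤ) : ℝ) := by
    rw [two_zpow_int_cast, Int.toNat_of_nonneg (by omega : (0:ℤ) ≤ B - b),
      eq_div_iff (by positivity)]
    calc (2:ℝ)^b * t * 2^(B-b) = ((2:ℝ)^b * 2^(B-b)) * t := by ring
    _ = (2:ℝ)^B * t := by
        rw [← zpow_add₀ (by norm_num : (2:ℝ) ≠ 0)]
        congr 2
        ring
  rw [key, floor_div_int' _ _ (by positivity)]

/-- floors at coarser scales are determined by floors at finer scales. -/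
lemma floor_zpow_eq_of_le {b B : ℤ} (h : b ≤ B) {y y' : ℝ}
    (hy : ⌊(2:ℝ)^B * y⌋ = ⌊(2:ℝ)^B * y'⌋) : ⌊(2:ℝ)^b * y⌋ = ⌊(2:ℝ)^b * y'⌋ := by
  rw [floor_scale h, floor_scale h, hy]

/-- adding `2^{-a}` adds `2^{b-a}` to the floor at scale `b ≥ a`. -/
lemma floor_flip_ge {a b : ℤ} (h : a ≤ b) (x : ℝ) :
    ⌊(2:ℝ)^b * (x + 2^(-a))⌋ = ⌊(2:ℝ)^b * x⌋ + 2^((b-a).toNat) := by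
  have e : (2:ℝ)^b * (x + 2^(-a)) = (2:ℝ)^b * x + (((2:ℤ)^((b-a).toNat) : ℤ) : ℝ) := by
    rw [two_zpow_int_cast, Int.toNat_of_nonneg (by omega : (0:ℤ) ≤ b - a), mul_add,
      ← zpow_add₀ (by norm_num : (2:ℝ) ≠ 0)]
    rw [sub_eq_add_neg]
  rw [e, Int.floor_add_intCast]

/-- adding `2^{-a}` does not change the floor at scale `b < a` when the digit at `a` is even. -/
lemma floor_flip_lt {a b : ℤ} (h : b < a) (x : ℝ) (heven : ⌊(2:ℝ)^a * x⌋ % 2 = 0) :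
    ⌊(2:ℝ)^b * (x + 2^(-a))⌋ = ⌊(2:ℝ)^b * x⌋ := by
  have hfa : ⌊(2:ℝ)^a * (x + 2^(-a))⌋ = ⌊(2:ℝ)^a * x⌋ + 1 := by
    have := floor_flip_ge (le_refl a) x
    simpa using this
  rw [floor_scale (le_of_lt h), floor_scale (le_of_lt h), hfa]
  exact ediv_add_one_eq heven ⟨2^((a-b).toNat - 1), by
    rw [← pow_succ']
    congr 1
    omega⟩ (by positivity)

/-- the walsh exponent sum can be extended to any `M > k`. -/
lemma walsh_eq_range (k M : ℕ) (hM : k < M) (x : ℝ) :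
    walsh k x = (-1 : ℝ) ^ (∑ i ∈ Finset.range M, (k / 2^i % 2) * binDigit (i+1) x) := by
  unfold walsh
  congr 1
  apply Finset.sum_subset
  · exact Finset.range_subset_range.mpr (by omega)
  · intro i hi hni
    simp only [Finset.mem_range] at hi hni
    have : k < 2^i := lt_of_lt_of_le (Nat.lt_two_pow_self (n := k)) (Nat.pow_le_pow_right (by norm_num) (by omega))
    rw [Nat.div_eq_of_lt this]
    simp

/-- walsh functions agree if all exponent terms agree. -/
lemma walsh_congr {k k' M : ℕ} (hk : k < M) (hk' : k' < M) {x x' : ℝ}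
    (h : ∀ i < M, (k / 2^i % 2) * binDigit (i+1) x = (k' / 2^i % 2) * binDigit (i+1) x') :
    walsh k x = walsh k' x' := by
  rw [walsh_eq_range k M hk, walsh_eq_range k' M hk']
  congr 1
  exact Finset.sum_congr rfl fun i hi => h i (Finset.mem_range.mp hi)

/-- walsh functions negate if the exponent terms agree except at one spot where they go 0 → 1. -/
lemma walsh_flip {k k' M i₀ : ℕ} (hk : k < M) (hk' : k' < M) (hi₀ : i₀ < M) {x x' : ℝ}
    (h : ∀ i < M, i ≠ i₀ → (k / 2^i % 2) * binDigit (i+1) x = (k' / 2^i % 2) * binDigit (i+1) x')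
    (h0 : (k / 2^i₀ % 2) * binDigit (i₀+1) x = 0)
    (h1 : (k' / 2^i₀ % 2) * binDigit (i₀+1) x' = 1) :
    walsh k' x' = - walsh k x := by
  rw [walsh_eq_range k M hk, walsh_eq_range k' M hk']
  have hmem : i₀ ∈ Finset.range M := Finset.mem_range.mpr hi₀
  have hsum : (∑ i ∈ Finset.range M, (k' / 2^i % 2) * binDigit (i+1) x')
      = (∑ i ∈ Finset.range M, (k / 2^i % 2) * binDigit (i+1) x) + 1 := by
    rw [← Finset.add_sum_erase _ _ hmem, ← Finset.add_sum_erase _ _ hmem, h0, h1]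
    rw [zero_add, add_comm]
    congr 1
    apply Finset.sum_congr rfl
    intro i hi
    exact (h i (Finset.mem_range.mp (Finset.mem_of_mem_erase hi))
      (Finset.ne_of_mem_erase hi)).symm
  rw [hsum, pow_succ]
  ring

lemma walsh_zero (x : ℝ) : walsh 0 x = 1 := by
  unfold walsh
  simp

lemma binDigit_cast (j : ℕ) (x : ℝ) (hx : 0 ≤ x) :
    (binDigit j x : ℤ) = ⌊(2:ℝ)^(j:ℤ) * x⌋ % 2 := by
  unfold binDigit
  have h0 : (0:ℤ) ≤ ⌊(2:ℝ)^j * x⌋ := Int.floor_nonneg.2 (by positivity)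
  rw [zpow_natCast]
  push_cast [Int.toNat_of_nonneg h0]
  rfl

lemma bit_floor_cast (i : ℕ) (x : ℝ) (hx : 0 ≤ x) :
    ((⌊x⌋.toNat / 2^i % 2 : ℕ) : ℤ) = ⌊(2:ℝ)^(-(i:ℤ)) * x⌋ % 2 := by
  have h0 : (0:ℤ) ≤ ⌊x⌋ := Int.floor_nonneg.2 hx
  have h1 : ⌊(2:ℝ)^(-(i:ℤ)) * x⌋ = ⌊x⌋ / (2:ℤ)^i := by
    have e : (2:ℝ)^(-(i:ℤ)) * x = x / (((2:ℤ)^i : ℤ) : ℝ) := by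
      rw [zpow_neg, zpow_natCast]
      push_cast
      ring
    rw [e, floor_div_int' _ _ (by positivity)]
  rw [h1]
  push_cast [Int.toNat_of_nonneg h0]
  rfl

lemma walshKernel_flip {j : ℤ} {y : ℝ} (hy1 : (2:ℝ)^j ≤ y) (hy2 : y < 2^(j+1))
    {x : ℝ} (hx : 0 ≤ x) (heven : ⌊(2:ℝ)^(j+1) * x⌋ % 2 = 0) :
    walshKernel (x + 2^(-(j+1))) y = - walshKernel x y := by
  set a : ℤ := j + 1 with ha
  set x' : ℝ := x + 2^(-a) with hx'def
  have hy0 : 0 < y := lt_of_lt_of_le (by positivity) hy1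
  have hx'0 : 0 ≤ x' := by
    have h2 : (0:ℝ) < 2^(-a) := by positivity
    rw [hx'def]; linarith
  have hflip_self : ⌊(2:ℝ)^a * x'⌋ = ⌊(2:ℝ)^a * x⌋ + 1 := by
    rw [hx'def]
    have h := floor_flip_ge (le_refl a) x
    simp only [sub_self, Int.toNat_zero, pow_zero] at h
    exact h
  have hflip_gt : ∀ b : ℤ, a < b → ⌊(2:ℝ)^b * x'⌋ % 2 = ⌊(2:ℝ)^b * x⌋ % 2 := by
    intro b hb
    rw [hx'def, floor_flip_ge (le_of_lt hb) x]
    have h2 : (2:ℤ) ∣ 2^((b-a).toNat) := dvd_pow_self 2 (by omega)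
    omega
  have hflip_lt : ∀ b : ℤ, b < a → ⌊(2:ℝ)^b * x'⌋ = ⌊(2:ℝ)^b * x⌋ := by
    intro b hb
    rw [hx'def]
    exact floor_flip_lt hb x heven
  have hdig : ∀ i : ℕ, ((i:ℤ)+1) ≠ a → binDigit (i+1) x' = binDigit (i+1) x := by
    intro i hi
    have h : (binDigit (i+1) x' : ℤ) = (binDigit (i+1) x : ℤ) := by
      rw [binDigit_cast _ _ hx'0, binDigit_cast _ _ hx]
      rcases lt_or_gt_of_ne hi with h | h
      · rw [hflip_lt _ (by exact_mod_cast h)]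
      · exact hflip_gt _ (by exact_mod_cast h)
    exact_mod_cast h
  by_cases hj : 0 ≤ j
  · -- fractional digit flip: j ≥ 0
    set J : ℕ := j.toNat with hJ
    have hjJ : (J:ℤ) = j := Int.toNat_of_nonneg hj
    have hJa : ((J:ℤ)+1) = a := by omega
    set N : ℕ := (⌊y⌋).toNat with hN
    have hfl0 : (0:ℤ) ≤ ⌊y⌋ := Int.floor_nonneg.2 (le_of_lt hy0)
    have hNZ : (N:ℤ) = ⌊y⌋ := Int.toNat_of_nonneg hfl0
    have hNlow : (2:ℤ)^J ≤ ⌊y⌋ := by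
      apply Int.le_floor.mpr
      calc ((2^J : ℤ) : ℝ) = (2:ℝ)^(J:ℤ) := two_zpow_int_cast J
      _ = (2:ℝ)^j := by rw [hjJ]
      _ ≤ y := hy1
    have hNhigh : ⌊y⌋ < (2:ℤ)^(J+1) := by
      apply Int.floor_lt.mpr
      calc y < (2:ℝ)^(j+1) := hy2
      _ = ((2^(J+1) : ℤ) : ℝ) := by rw [two_zpow_int_cast (J+1)]; congr 1; omega
    have hNlow' : 2^J ≤ N := by
      zify
      rw [hNZ]
      exact_mod_cast hNlow
    have hNhigh' : N < 2^(J+1) := by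
      zify
      rw [hNZ]
      exact_mod_cast hNhigh
    have hbitJ : N / 2^J % 2 = 1 := by
      have h : N / 2^J = 1 := Nat.div_eq_of_lt_le (by simpa using hNlow')
        (by rw [show (1+1)*2^J = 2^(J+1) by ring]; exact hNhigh')
      rw [h]
    have hd0 : binDigit (J+1) x = 0 := by
      have h : (binDigit (J+1) x : ℤ) = 0 := by
        rw [binDigit_cast _ _ hx, show ((J+1:ℕ):ℤ) = a from by push_cast; omega]
        exact heven
      exact_mod_cast h
    have hd1 : binDigit (J+1) x' = 1 := by
      have h : (binDigit (J+1) x' : ℤ) = 1 := by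
        rw [binDigit_cast _ _ hx'0, show ((J+1:ℕ):ℤ) = a from by push_cast; omega,
          hflip_self]
        omega
      exact_mod_cast h
    have hfac1 : walsh N x' = - walsh N x := by
      apply walsh_flip (M := N+1) (i₀ := J) (by omega) (by omega)
        (by have := Nat.lt_two_pow_self (n := J); omega)
      · intro i _ hiJ
        rw [hdig i (by omega)]
      · rw [hd0, mul_zero]
      · rw [hd1, hbitJ, mul_one]
    have hfx : ⌊x'⌋ = ⌊x⌋ := by
      have h := hflip_lt 0 (by omega)
      simpa using h
    show walsh (⌊y⌋).toNat x' * walsh (⌊x'⌋).toNat y = -(walsh (⌊y⌋).toNat x * walsh (⌊x⌋).toNat y)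
    rw [hfx, ← hN, hfac1]
    ring
  · -- integer digit flip: j < 0
    have ha0 : a ≤ 0 := by omega
    set b₀ : ℕ := (-a).toNat with hb₀
    have hb₀Z : (b₀:ℤ) = -a := Int.toNat_of_nonneg (by omega)
    have hyfl : ⌊y⌋ = 0 := by
      rw [Int.floor_eq_zero_iff]
      constructor
      · exact le_of_lt hy0
      · calc y < (2:ℝ)^a := hy2
        _ ≤ 1 := zpow_le_one_of_nonpos₀ (by norm_num) ha0
    set K : ℕ := (⌊x⌋).toNat with hK
    set K' : ℕ := (⌊x'⌋).toNat with hK'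
    have hxfl0 : (0:ℤ) ≤ ⌊x⌋ := Int.floor_nonneg.2 hx
    have hx'fl0 : (0:ℤ) ≤ ⌊x'⌋ := Int.floor_nonneg.2 hx'0
    have hKZ : (K:ℤ) = ⌊x⌋ := Int.toNat_of_nonneg hxfl0
    have hK'Z : (K':ℤ) = ⌊x'⌋ := Int.toNat_of_nonneg hx'fl0
    have hfl' : ⌊x'⌋ = ⌊x⌋ + 2^b₀ := by
      have h2 := floor_flip_ge ha0 x
      simp only [zpow_zero, one_mul, zero_sub] at h2
      rw [hx'def]
      exact h2
    have hK'K : K' = K + 2^b₀ := by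
      have h : (K':ℤ) = (K:ℤ) + 2^b₀ := by
        rw [hK'Z, hKZ]
        exact hfl'
      exact_mod_cast h
    have h2p : 0 < 2^b₀ := pow_pos (by norm_num) b₀
    have hb₀M : b₀ < K' + 1 := by
      rw [hK'K]
      have := Nat.lt_two_pow_self (n := b₀)
      omega
    have hfac2 : walsh K' y = - walsh K y := by
      apply walsh_flip (M := K'+1) (i₀ := b₀) (by omega) (by omega) hb₀M
      · intro i _ hib
        have h : ((⌊x⌋.toNat / 2^i % 2 : ℕ) : ℤ) = ((⌊x'⌋.toNat / 2^i % 2 : ℕ) : ℤ) := by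
          rw [bit_floor_cast i x hx, bit_floor_cast i x' hx'0]
          rcases lt_or_gt_of_ne (show -(i:ℤ) ≠ a by omega) with h | h
          · rw [hflip_lt _ h]
          · rw [hflip_gt _ h]
        have h' : K / 2^i % 2 = K' / 2^i % 2 := by exact_mod_cast h
        rw [h']
      · have h : ((K / 2^b₀ % 2 : ℕ) : ℤ) = 0 := by
          rw [hK, bit_floor_cast b₀ x hx, show -(b₀:ℤ) = a by omega]
          exact heven
        have h' : K / 2^b₀ % 2 = 0 := by exact_mod_cast h
        rw [h', zero_mul]
      · have h : ((K' / 2^b₀ % 2 : ℕ) : ℤ) = 1 := by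
          rw [hK', bit_floor_cast b₀ x' hx'0, show -(b₀:ℤ) = a by omega, hflip_self]
          omega
        have h' : K' / 2^b₀ % 2 = 1 := by exact_mod_cast h
        have hdy : binDigit (b₀+1) y = 1 := by
          have hh : (binDigit (b₀+1) y : ℤ) = 1 := by
            rw [binDigit_cast _ _ (le_of_lt hy0)]
            have hfy : ⌊(2:ℝ)^((b₀+1:ℕ):ℤ) * y⌋ = 1 := by
              rw [Int.floor_eq_iff]
              have hba : ((b₀+1:ℕ):ℤ) = -j := by omega
              rw [hba]
              constructor
              · push_cast
                rw [show (1:ℝ) = 2^(-j) * 2^j by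
                    rw [← zpow_add₀ (by norm_num : (2:ℝ) ≠ 0)]; norm_num]
                exact mul_le_mul_of_nonneg_left hy1 (by positivity)
              · push_cast
                rw [show (1:ℝ)+1 = 2^(-j) * 2^(j+1) by
                    rw [← zpow_add₀ (by norm_num : (2:ℝ) ≠ 0)]; norm_num]
                exact mul_lt_mul_of_pos_left hy2 (by positivity)
            rw [hfy]
            norm_num
          exact_mod_cast hh
        rw [h', hdy]
    show walsh (⌊y⌋).toNat x' * walsh (⌊x'⌋).toNat y = -(walsh (⌊y⌋).toNat x * walsh (⌊x⌋).toNat y)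
    rw [hyfl]
    simp only [Int.toNat_zero, walsh_zero, one_mul]
    exact hfac2

/-- the kernel is locally constant in `y` on the dyadic grid of rank `m`, for `x < 2^m`. -/
lemma walshKernel_const {m : ℤ} {y y' : ℝ} (hy : 0 ≤ y) (hy' : 0 ≤ y')
    (hfl : ⌊(2:ℝ)^m * y⌋ = ⌊(2:ℝ)^m * y'⌋) {x : ℝ} (hx : 0 ≤ x) (hxm : x < (2:ℝ)^m) :
    walshKernel x y = walshKernel x y' := by
  have hfacA : walsh (⌊y⌋).toNat x = walsh (⌊y'⌋).toNat x := by
    set Ny : ℕ := (⌊y⌋).toNat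
    set Ny' : ℕ := (⌊y'⌋).toNat
    apply walsh_congr (M := Ny + Ny' + 1) (by omega) (by omega)
    intro i _
    by_cases hd : binDigit (i+1) x = 0
    · rw [hd, mul_zero, mul_zero]
    · have hd1 : 1 ≤ ⌊(2:ℝ)^((i+1:ℕ):ℤ) * x⌋ := by
        by_contra hlt
        push_neg at hlt
        apply hd
        have h0 : (0:ℤ) ≤ ⌊(2:ℝ)^((i+1:ℕ):ℤ) * x⌋ := Int.floor_nonneg.2 (by positivity)
        have : (binDigit (i+1) x : ℤ) = 0 := by
          rw [binDigit_cast _ _ hx]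
          omega
        exact_mod_cast this
      have him : -(i:ℤ) ≤ m := by
        by_contra hc
        push_neg at hc
        have h1 : (1:ℝ) ≤ (2:ℝ)^((i+1:ℕ):ℤ) * x := by
          have := Int.le_floor.mp hd1
          exact_mod_cast this
        have h2 : (2:ℝ)^((i+1:ℕ):ℤ) * x < 2^((i+1:ℕ):ℤ) * 2^m := by
          apply mul_lt_mul_of_pos_left hxm (by positivity)
        rw [← zpow_add₀ (by norm_num : (2:ℝ) ≠ 0)] at h2
        have h3 : ((i+1:ℕ):ℤ) + m ≤ 0 := by push_cast; omega
        have h4 : (2:ℝ)^(((i+1:ℕ):ℤ) + m) ≤ 1 := zpow_le_one_of_nonpos₀ (by norm_num) h3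
        linarith
      have hbit : (Ny / 2^i % 2) = (Ny' / 2^i % 2) := by
        have h : ((Ny / 2^i % 2 : ℕ) : ℤ) = ((Ny' / 2^i % 2 : ℕ) : ℤ) := by
          rw [bit_floor_cast i y hy, bit_floor_cast i y' hy',
            floor_zpow_eq_of_le (by omega : -(i:ℤ) ≤ m) hfl]
        exact_mod_cast h
      rw [hbit]
  have hfacB : walsh (⌊x⌋).toNat y = walsh (⌊x⌋).toNat y' := by
    set Kx : ℕ := (⌊x⌋).toNat
    apply walsh_congr (M := Kx + 1) (by omega) (by omega)
    intro i _
    by_cases hb : Kx / 2^i % 2 = 0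
    · rw [hb, zero_mul, zero_mul]
    · have hib : 2^i ≤ Kx := by
        rcases Nat.lt_or_ge Kx (2^i) with h | h
        · rw [Nat.div_eq_of_lt h] at hb
          simp at hb
        · exact h
      have him : ((i+1:ℕ):ℤ) ≤ m := by
        by_contra hc
        push_neg at hc
        have h1 : ((2:ℕ)^i : ℝ) ≤ x := by
          calc ((2:ℕ)^i : ℝ) ≤ ((Kx:ℕ) : ℝ) := by exact_mod_cast hib
          _ = ((⌊x⌋ : ℤ) : ℝ) := by
              norm_cast
              exact Int.toNat_of_nonneg (Int.floor_nonneg.2 hx)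
          _ ≤ x := Int.floor_le x
        have h2 : (2:ℝ)^(i:ℤ) < 2^m := by
          calc (2:ℝ)^(i:ℤ) = ((2:ℕ)^i : ℝ) := by rw [← two_zpow_int_cast]; push_cast; ring
          _ ≤ x := h1
          _ < 2^m := hxm
        have h3 : m ≤ (i:ℤ) := by omega
        have h4 : (2:ℝ)^m ≤ 2^(i:ℤ) := by
          apply zpow_le_zpow_right₀ (by norm_num) h3
        linarith
      have hbd : binDigit (i+1) y = binDigit (i+1) y' := by
        have h : (binDigit (i+1) y : ℤ) = (binDigit (i+1) y' : ℤ) := by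
          rw [binDigit_cast _ _ hy, binDigit_cast _ _ hy',
            floor_zpow_eq_of_le him hfl]
        exact_mod_cast h
      rw [hbd]
  unfold walshKernel
  rw [hfacA, hfacB]

lemma two_zpow_neg_mul (n : ℤ) (t : ℝ) : (2:ℝ)^(-n) * ((2:ℝ)^n * t) = t := by
  rw [← mul_assoc, ← zpow_add₀ (by norm_num : (2:ℝ) ≠ 0), neg_add_cancel, zpow_zero, one_mul]

lemma mem_dyadic_of_floor {n : ℤ} {t : ℝ} (ht : 0 ≤ t) :
    t ∈ Set.Ico (((⌊(2:ℝ)^n * t⌋.toNat : ℕ) : ℝ) * 2^(-n))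
      ((((⌊(2:ℝ)^n * t⌋.toNat : ℕ) : ℝ) + 1) * 2^(-n)) := by
  have h2 : (0:ℝ) < 2^(-n) := by positivity
  have h0 : (0:ℤ) ≤ ⌊(2:ℝ)^n * t⌋ := Int.floor_nonneg.2 (by positivity)
  have hcast : ((⌊(2:ℝ)^n * t⌋.toNat : ℕ) : ℝ) = ((⌊(2:ℝ)^n * t⌋ : ℤ) : ℝ) := by
    exact_mod_cast congrArg (fun z : ℤ => (z : ℝ)) (Int.toNat_of_nonneg h0)
  rw [hcast]
  constructor
  · have h1 : ((⌊(2:ℝ)^n * t⌋ : ℤ) : ℝ) ≤ 2^n * t := Int.floor_le _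
    have h3 := mul_le_mul_of_nonneg_left h1 (le_of_lt h2)
    rw [two_zpow_neg_mul] at h3
    linarith [h3, mul_comm ((2:ℝ)^(-n)) ((⌊(2:ℝ)^n * t⌋ : ℤ) : ℝ)]
  · have h1 : 2^n * t < ((⌊(2:ℝ)^n * t⌋ : ℤ) : ℝ) + 1 := Int.lt_floor_add_one _
    have h3 := mul_lt_mul_of_pos_left h1 h2
    rw [two_zpow_neg_mul] at h3
    linarith [h3, mul_comm ((2:ℝ)^(-n)) (((⌊(2:ℝ)^n * t⌋ : ℤ) : ℝ) + 1)]

lemma floor_eq_of_mem_dyadic {n : ℤ} {k : ℕ} {t : ℝ}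
    (h : t ∈ Set.Ico ((k:ℝ) * 2^(-n)) (((k:ℝ)+1) * 2^(-n))) :
    ⌊(2:ℝ)^n * t⌋ = (k:ℤ) := by
  have h2 : (0:ℝ) < 2^(n:ℤ) := by positivity
  rw [Int.floor_eq_iff]
  constructor
  · have h3 := mul_le_mul_of_nonneg_left h.1 (le_of_lt h2)
    calc ((k:ℤ):ℝ) = (2:ℝ)^n * ((k:ℝ) * 2^(-n)) := by
          rw [mul_comm ((k:ℝ)) ((2:ℝ)^(-n:ℤ)), ← mul_assoc, mul_comm ((2:ℝ)^(n:ℤ)),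
            (by rw [← zpow_add₀ (by norm_num : (2:ℝ) ≠ 0), neg_add_cancel, zpow_zero] :
              (2:ℝ)^(-n) * (2:ℝ)^n = 1), one_mul]
          push_cast
          ring
    _ ≤ (2:ℝ)^n * t := h3
  · have h3 := mul_lt_mul_of_pos_left h.2 h2
    calc (2:ℝ)^n * t < (2:ℝ)^n * (((k:ℝ)+1) * 2^(-n)) := h3
    _ = ((k:ℤ):ℝ) + 1 := by
          rw [mul_comm ((k:ℝ)+1) ((2:ℝ)^(-n:ℤ)), ← mul_assoc, mul_comm ((2:ℝ)^(n:ℤ)),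
            (by rw [← zpow_add₀ (by norm_num : (2:ℝ) ≠ 0), neg_add_cancel, zpow_zero] :
              (2:ℝ)^(-n) * (2:ℝ)^n = 1), one_mul]
          push_cast
          ring

lemma walshKernel_measurable (y : ℝ) : Measurable (fun x => walshKernel x y) := by
  have hb : ∀ j : ℕ, Measurable fun x : ℝ => binDigit j x := by
    intro j
    have hfloor : Measurable fun x : ℝ => ⌊(2:ℝ)^j * x⌋ :=
      Measurable.floor (measurable_const.mul measurable_id)
    exact Measurable.comp (g := fun q : ℤ => q.toNat % 2) measurable_from_top hfloor
  have h1 : ∀ N : ℕ, Measurable fun x : ℝ => walsh N x := by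
    intro N
    unfold walsh
    apply Measurable.comp (g := fun s : ℕ => (-1:ℝ)^s) measurable_from_top
    apply Finset.measurable_sum
    intro i _
    exact (hb (i+1)).const_mul _
  have hfloor2 : Measurable fun x : ℝ => ⌊x⌋ := Measurable.floor measurable_id
  have h2 : Measurable fun x : ℝ => walsh (⌊x⌋).toNat y :=
    Measurable.comp (g := fun q : ℤ => walsh q.toNat y) measurable_from_top hfloor2
  exact (h1 _).mul h2

lemma walshKernel_abs_le (x y : ℝ) : ‖walshKernel x y‖ ≤ 1 := by
  unfold walshKernel walsh
  rw [norm_mul, norm_pow, norm_pow]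
  norm_num

lemma integral_flip_zero {g : ℝ → ℝ} (a : ℤ)
    (hgint : IntegrableOn g (Set.Ici 0) volume)
    (hflip : ∀ x : ℝ, 0 ≤ x → ⌊(2:ℝ)^a * x⌋ % 2 = 0 → g (x + 2^(-a)) = - g x) :
    ∫ x in Set.Ici (0:ℝ), g x = 0 := by
  set c : ℝ := 2^(-a) with hc
  set E : Set ℝ := {x | ⌊(2:ℝ)^a * x⌋ % 2 = 0} with hE
  have hmeasE : MeasurableSet E := by
    have hm : Measurable fun x : ℝ => ⌊(2:ℝ)^a * x⌋ % 2 :=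
      Measurable.comp (g := fun q : ℤ => q % 2) measurable_from_top
        (Measurable.floor (measurable_const.mul measurable_id))
    exact hm (measurableSet_singleton 0)
  have hS : MeasurableSet (Set.Ici (0:ℝ)) := measurableSet_Ici
  have h1 : MeasurableSet (Set.Ici (0:ℝ) ∩ E) := hS.inter hmeasE
  have h2 : MeasurableSet (Set.Ici (0:ℝ) \ E) := hS.diff hmeasE
  have hsplit := integral_inter_add_diff (μ := volume) (f := g) (s := Set.Ici 0)
    (t := E) hmeasE hgint
  have hfloor_add : ∀ x : ℝ, ⌊(2:ℝ)^a * (x + c)⌋ = ⌊(2:ℝ)^a * x⌋ + 1 := by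
    intro x
    have h := floor_flip_ge (le_refl a) x
    simp only [sub_self, Int.toNat_zero, pow_zero] at h
    exact h
  have hcpos : (0:ℝ) < c := by rw [hc]; positivity
  have hiff : ∀ x : ℝ, x + c ∈ (Set.Ici 0 \ E) ↔ x ∈ (Set.Ici 0 ∩ E) := by
    intro x
    simp only [Set.mem_diff, Set.mem_inter_iff, Set.mem_Ici, hE, Set.mem_setOf_eq, hfloor_add]
    constructor
    · rintro ⟨hx0, hodd⟩
      have hq0 : (0:ℤ) ≤ ⌊(2:ℝ)^a * (x + c)⌋ :=
        Int.floor_nonneg.2 (mul_nonneg (by positivity) hx0)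
      rw [hfloor_add] at hq0
      have hqf : (0:ℤ) ≤ ⌊(2:ℝ)^a * x⌋ := by omega
      have hxf : ((0:ℤ):ℝ) ≤ (2:ℝ)^a * x := le_trans (by exact_mod_cast hqf) (Int.floor_le _)
      have h2a : (0:ℝ) < 2^a := by positivity
      constructor
      · exact le_of_mul_le_mul_left (by push_cast at hxf; linarith) h2a
      · omega
    · rintro ⟨hx0, heven⟩
      exact ⟨by linarith, by omega⟩
  have ht : ∫ x in (Set.Ici 0 \ E), g x = ∫ x in (Set.Ici 0 ∩ E), g (x + c) := by
    rw [← integral_indicator h2, ← integral_indicator h1]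
    rw [← integral_add_right_eq_self (fun x => (Set.Ici 0 \ E).indicator g x) c]
    congr 1
    funext x
    simp only [Set.indicator_apply]
    exact if_congr (hiff x) rfl rfl
  have hneg : ∫ x in (Set.Ici 0 ∩ E), g (x + c) = ∫ x in (Set.Ici 0 ∩ E), - g x :=
    setIntegral_congr_fun h1 (fun x hx => hflip x hx.1 hx.2)
  have hfin : ∫ x in (Set.Ici 0 ∩ E), - g x = - ∫ x in (Set.Ici 0 ∩ E), g x :=
    integral_neg g
  linarith [hsplit, ht, hneg, hfin]

lemma f_flip {n : ℤ} {f : ℝ → ℝ}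
    (hconst : ∀ k : ℕ, ∀ x ∈ Set.Ico ((k:ℝ) * 2^(-n)) (((k:ℝ)+1) * 2^(-n)),
      ∀ x' ∈ Set.Ico ((k:ℝ) * 2^(-n)) (((k:ℝ)+1) * 2^(-n)), f x = f x')
    {a : ℤ} (hna : n < a) {x : ℝ} (hx : 0 ≤ x)
    (heven : ⌊(2:ℝ)^a * x⌋ % 2 = 0) : f (x + 2^(-a)) = f x := by
  have hx' : 0 ≤ x + 2^(-a) := by positivity
  have hKfl : ⌊(2:ℝ)^n * (x + 2^(-a))⌋ = ⌊(2:ℝ)^n * x⌋ := floor_flip_lt hna x heven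
  have hm1 := mem_dyadic_of_floor (n := n) hx
  have hm2 := mem_dyadic_of_floor (n := n) hx'
  rw [hKfl] at hm2
  exact hconst (⌊(2:ℝ)^n * x⌋.toNat) _ hm2 _ hm1

/-- If an integrable `f` vanishes outside `[0, 2^m]` and is constant on every dyadic
interval of rank `n`, then `𝔉f` vanishes outside `[0, 2^n]` and is constant on every
dyadic interval of rank `m`. -/
theorem walshFourier_support_rank (m n : ℤ) (f : ℝ → ℝ)
    (hint : IntegrableOn f (Set.Ici 0) volume)
    (hsupp : ∀ x : ℝ, 0 ≤ x → (2:ℝ)^m < x → f x = 0)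
    (hconst : ∀ k : ℕ, ∀ x ∈ Set.Ico ((k:ℝ) * 2^(-n)) (((k:ℝ)+1) * 2^(-n)),
      ∀ x' ∈ Set.Ico ((k:ℝ) * 2^(-n)) (((k:ℝ)+1) * 2^(-n)), f x = f x') :
    (∀ y : ℝ, 0 ≤ y → (2:ℝ)^n < y → walshFourier f y = 0) ∧
    (∀ j : ℕ, ∀ y ∈ Set.Ico ((j:ℝ) * 2^(-m)) (((j:ℝ)+1) * 2^(-m)),
      ∀ y' ∈ Set.Ico ((j:ℝ) * 2^(-m)) (((j:ℝ)+1) * 2^(-m)),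
        walshFourier f y = walshFourier f y') := by
  constructor
  · intro y hy0 hyn
    have hy0' : (0:ℝ) < y := lt_trans (by positivity) hyn
    obtain ⟨j, hj1, hj2⟩ := exists_mem_Ico_zpow hy0' (by norm_num : (1:ℝ) < 2)
    have hnj : n ≤ j := by
      have h := lt_trans hyn hj2
      have h2 := (zpow_lt_zpow_iff_right₀ (by norm_num : (1:ℝ) < 2)).mp h
      omega
    show (∫ x in Set.Ici (0:ℝ), walshKernel x y * f x) = 0
    have hker := walshKernel_measurable y
    have hgint : IntegrableOn (fun x => walshKernel x y * f x) (Set.Ici 0) volume :=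
      Integrable.bdd_mul hint hker.aestronglyMeasurable (c := 1) (Filter.Eventually.of_forall fun x => walshKernel_abs_le x y)
    apply integral_flip_zero (j+1) hgint
    intro x hx heven
    rw [walshKernel_flip hj1 hj2 hx heven, f_flip hconst (by omega) hx heven]
    ring
  · intro jj y hy y' hy'
    have hy0 : (0:ℝ) ≤ y := le_trans (by positivity) hy.1
    have hy0' : (0:ℝ) ≤ y' := le_trans (by positivity) hy'.1
    have hfl : ⌊(2:ℝ)^m * y⌋ = ⌊(2:ℝ)^m * y'⌋ := by
      rw [floor_eq_of_mem_dyadic hy, floor_eq_of_mem_dyadic hy']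
    show (∫ x in Set.Ici (0:ℝ), walshKernel x y * f x)
      = ∫ x in Set.Ici (0:ℝ), walshKernel x y' * f x
    apply setIntegral_congr_ae measurableSet_Ici
    have hne : ∀ᵐ x : ℝ, x ≠ (2:ℝ)^m := by
      rw [MeasureTheory.ae_iff]
      have h0 : volume ({(2:ℝ)^m} : Set ℝ) = 0 := measure_singleton _
      convert h0 using 2
      ext t
      simp
    filter_upwards [hne] with x hxne hxmem
    rcases lt_trichotomy x ((2:ℝ)^m) with h|h|h
    · rw [walshKernel_const hy0 hy0' hfl hxmem h]
    · exact absurd h hxne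
    · rw [hsupp x hxmem h, mul_zero, mul_zero]
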